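/- Let p, q, r be real constants with p² + q² + r² ≠ 0 and suppose the discriminant D = q² − 4pr > 0. Then there exist real constants a, b, c, d with ad − bc ≠ 0 and a nonzero constant κ such that κ(pd² − qcd + rc²) = 0, κ(−2pbd + q(ad+bc) − 2rac) = 1, and κ(pb² − qab + ra²) = 0; i.e., the triple (p,q,r) is equivalent to (0,1,0) under the induced action. -/

import Mathlib

theorem stmt14 (p q r : ℝ) (hne : p^2 + q^2 + r^2 ≠ 0) (hD : q^2 - 4*p*r > 0) :
    ∃ a b c d κ : ℝ, a*d - b*c ≠ 0 ∧ κ ≠ 0 ∧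
      κ*(p*d^2 - q*c*d + r*c^2) = 0 ∧
      κ*(-2*p*b*d + q*(a*d+b*c) - 2*r*a*c) = 1 ∧
      κ*(p*b^2 - q*a*b + r*a^2) = 0 := by
  by_cases hp : p = 0
  · -- p = 0, so q ≠ 0
    have hq : q ≠ 0 := by
      intro h; rw [hp, h] at hD; nlinarith
    refine ⟨1, r/q, 0, 1, 1/q, by norm_num, by positivity <;> simp [hq], ?_, ?_, ?_⟩ <;>
      field_simp [hp] <;> subst hp <;> ring
  · -- p ≠ 0
    set s := Real.sqrt (q^2 - 4*p*r) with hs_def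
    have hs2 : s^2 = q^2 - 4*p*r := Real.sq_sqrt (le_of_lt hD)
    have hs : s > 0 := Real.sqrt_pos.mpr hD
    refine ⟨1, (q+s)/(2*p), 1, (q-s)/(2*p), p/(q^2-4*p*r), ?_, ?_, ?_, ?_, ?_⟩
    · have : (1:ℝ)*((q-s)/(2*p)) - ((q+s)/(2*p))*1 = -s/p := by
        field_simp; ring
      rw [this]
      intro h
      have := div_eq_zero_iff.mp h
      rcases this with h1 | h1
      · linarith
      · exact hp h1
    · exact div_ne_zero hp (ne_of_gt hD)
    · field_simp [ne_of_gt hD]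
      rw [div_eq_iff (by intro h; linarith)]
      linear_combination hs2
    · field_simp [ne_of_gt hD]
      rw [div_eq_iff (by intro h; linarith)]
      linear_combination hs2
    · field_simp [ne_of_gt hD]
      rw [div_eq_iff (by intro h; linarith)]
      linear_combination hs2
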